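/- The population limit of the doubly robust dose-component functional at dose δ satisfies E[ (f̄(δ|A=1)/π̄_D(δ|A=1,X))·(Y₁ − Y₀ − μ̄₁Δ(X,δ)) + m̄(δ|A=1) | A=1, D=δ ] = E[μ₁Δ(X,δ) | A=1] + ∫ (μ₁Δ(x,δ) − μ̄₁Δ(x,δ)) · { (f̄(δ|A=1)/π̄_D(δ|A=1,x)) / (f(δ|A=1)/π_D(δ|A=1,x)) − 1 } dP(x|A=1). -/
import Mathlib


open MeasureTheory

/-- **Population limit of the doubly robust dose component at dose `δ`.**  We work at a
fixed dose `δ` under the conditional distribution `ν` of `X` given `A=1`.  `πD x` is the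
true conditional density `π_D(δ|A=1,x)`, `f = ∫ πD dν` the marginal density `f(δ|A=1)`;
`πbD, μb` are the candidate (possibly misspecified) density and outcome models at `δ`,
with `fb = ∫ πbD dν` and `mb = ∫ μb dν`.  By Bayes' rule the conditional law `νδ` of `X`
given `A=1, D=δ` has density `πD x / f` w.r.t. `ν`.  Since
`E[Y₁-Y₀ | A=1, D=δ, X=x] = μ x` (the true trend `μ₁Δ(x,δ)`), the tower property gives
`E[(f̄/π̄_D)(Y₁-Y₀-μ̄₁Δ(X,δ)) + m̄ | A=1, D=δ] = ∫ (fb/πbD x)(μ x - μb x) νδ(dx) + mb`,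
and this equals
`E[μ₁Δ(X,δ)|A=1] + ∫ (μ x - μb x)·{(fb/πbD x)/(f/πD x) - 1} ν(dx)`. -/
theorem dose_component_population_limit
    {𝒳 : Type*} [MeasurableSpace 𝒳]
    (ν : Measure 𝒳) [IsProbabilityMeasure ν]
    (πD πbD μ μb : 𝒳 → ℝ) (f fb mb : ℝ) (ε : ℝ) (hε : 0 < ε)
    (hπDpos : ∀ x, ε ≤ πD x) (hπbDpos : ∀ x, ε ≤ πbD x)
    (hπDmeas : Measurable πD) (hπbDmeas : Measurable πbD)
    (hμmeas : Measurable μ) (hμbmeas : Measurable μb)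
    (hμbbd : ∃ C : ℝ, ∀ x, |μb x| ≤ C) (hπbDbd : ∃ C : ℝ, ∀ x, πbD x ≤ C)
    (hf : f = ∫ x, πD x ∂ν) (hfb : fb = ∫ x, πbD x ∂ν) (hmb : mb = ∫ x, μb x ∂ν)
    (hintμ : Integrable μ ν)
    (hintcorr : Integrable (fun x => (μ x - μb x) *
      ((fb / πbD x) / (f / πD x) - 1)) ν) :
    -- `νδ` = law of `X` given `A=1, D=δ` (Bayes' rule)
    ∫ x, (fb / πbD x) * (μ x - μb x)
        ∂(ν.withDensity (fun x => ENNReal.ofReal (πD x / f))) + mb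
      = ∫ x, μ x ∂ν
        + ∫ x, (μ x - μb x) * ((fb / πbD x) / (f / πD x) - 1) ∂ν := by
  -- μb is integrable (bounded measurable on a probability measure)
  obtain ⟨C, hC⟩ := hμbbd
  have hintμb : Integrable μb ν := by
    refine (integrable_const C).mono' hμbmeas.aestronglyMeasurable ?_
    filter_upwards with x using (by simpa using hC x)
  have hintdiff : Integrable (fun x => μ x - μb x) ν := hintμ.sub hintμb
  have hπDne : ∀ x, πD x ≠ 0 := fun x => (lt_of_lt_of_le hε (hπDpos x)).ne'
  have hπbDne : ∀ x, πbD x ≠ 0 := fun x => (lt_of_lt_of_le hε (hπbDpos x)).ne'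
  by_cases hint : Integrable πD ν
  · -- main case : `f ≥ ε > 0`
    have hfpos : 0 < f := by
      have : (ε : ℝ) = ∫ _x, (ε : ℝ) ∂ν := by simp
      have hle : (ε : ℝ) ≤ f := by
        rw [hf, this]
        exact integral_mono (integrable_const ε) hint fun x => hπDpos x
      linarith
    have hfne : f ≠ 0 := hfpos.ne'
    -- rewrite the withDensity integral
    have hmeas : Measurable fun x => (πD x / f).toNNReal :=
      (hπDmeas.div_const f).real_toNNReal
    have hLHS :
        ∫ x, (fb / πbD x) * (μ x - μb x)
            ∂(ν.withDensity (fun x => ENNReal.ofReal (πD x / f)))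
          = ∫ x, (πD x / f) * ((fb / πbD x) * (μ x - μb x)) ∂ν := by
      rw [show (fun x => ENNReal.ofReal (πD x / f))
            = (fun x => ((fun x => (πD x / f).toNNReal) x : ENNReal)) from rfl,
        integral_withDensity_eq_integral_smul hmeas]
      refine integral_congr_ae (Filter.Eventually.of_forall fun x => ?_)
      have hnn : 0 ≤ πD x / f := div_nonneg (le_trans hε.le (hπDpos x)) hfpos.le
      simp [NNReal.smul_def, Real.coe_toNNReal _ hnn]
    -- pointwise algebra
    have hpt : ∀ x, (πD x / f) * ((fb / πbD x) * (μ x - μb x))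
        = (μ x - μb x) * ((fb / πbD x) / (f / πD x) - 1) + (μ x - μb x) := by
      intro x
      field_simp
      ring
    rw [hLHS]
    calc ∫ x, (πD x / f) * ((fb / πbD x) * (μ x - μb x)) ∂ν + mb
        = ∫ x, ((μ x - μb x) * ((fb / πbD x) / (f / πD x) - 1) + (μ x - μb x)) ∂ν
            + mb := by
          rw [integral_congr_ae (Filter.Eventually.of_forall fun x => hpt x)]
      _ = (∫ x, (μ x - μb x) * ((fb / πbD x) / (f / πD x) - 1) ∂ν
            + ∫ x, (μ x - μb x) ∂ν) + mb := by
          rw [integral_add hintcorr hintdiff]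
      _ = ∫ x, μ x ∂ν
            + ∫ x, (μ x - μb x) * ((fb / πbD x) / (f / πD x) - 1) ∂ν := by
          rw [integral_sub hintμ hintμb, hmb]; ring
  · -- degenerate case : `πD` not integrable, so `f = 0`
    have hf0 : f = 0 := by
      rw [hf, integral_undef hint]
    subst hf0
    have hzero : (fun x => ENNReal.ofReal (πD x / 0)) = (0 : 𝒳 → ENNReal) := by
      funext x; simp [Pi.zero_apply]
    rw [hzero]
    rw [MeasureTheory.withDensity_zero]; simp only [integral_zero_measure, zero_add]
    have hcorr : ∀ x, (μ x - μb x) * ((fb / πbD x) / (0 / πD x) - 1)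
        = -(μ x - μb x) := by
      intro x; simp
    rw [integral_congr_ae (Filter.Eventually.of_forall fun x => hcorr x),
      integral_neg, integral_sub hintμ hintμb, hmb]
    ring
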